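/- For x > 0 define the exponential integral E₁(x) := ∫₀¹ z^{−1} e^{−x/z} dz. Then for all x > 0: (1/2) e^{−x} ln(1 + 2/x) ≤ E₁(x) ≤ e^{−x} ln(1 + 1/x). -/

import Mathlib

open MeasureTheory Real Set intervalIntegral

noncomputable section

/-- Euclidean norm of a point of ℝ³ (written in coordinates). -/
def enr (ζ : Fin 3 → ℝ) : ℝ := Real.sqrt (ζ 0 ^ 2 + ζ 1 ^ 2 + ζ 2 ^ 2)

/-- The weight functions φ_α(ζ) = π^{-3/4} ζ₁^{α₁} ζ₂^{α₂} ζ₃^{α₃} e^{-|ζ|²/2}. -/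
def phiα (α : Fin 3 → ℕ) (ζ : Fin 3 → ℝ) : ℝ :=
  Real.pi ^ (-(3 : ℝ) / 4) * ζ 0 ^ (α 0) * ζ 1 ^ (α 1) * ζ 2 ^ (α 2) *
    Real.exp (-(enr ζ) ^ 2 / 2)

/-- A_α = (2α₁)^{α₁/2}(2α₂)^{α₂/2}(2α₃)^{α₃/2} e^{-(α₁+α₂+α₃)/2} (with 0⁰ = 1). -/
def Aα (α : Fin 3 → ℕ) : ℝ :=
  (2 * (α 0 : ℝ)) ^ ((α 0 : ℝ) / 2) * (2 * (α 1 : ℝ)) ^ ((α 1 : ℝ) / 2) *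
    (2 * (α 2 : ℝ)) ^ ((α 2 : ℝ) / 2) *
    Real.exp (-((α 0 : ℝ) + (α 1 : ℝ) + (α 2 : ℝ)) / 2)

/-- The integral operator K(g)(ζ) = ∫ k(ζ,ζ*) g(ζ*) dζ*. -/
def Kop (k : (Fin 3 → ℝ) → (Fin 3 → ℝ) → ℝ) (g : (Fin 3 → ℝ) → ℝ) (ζ : Fin 3 → ℝ) : ℝ :=
  ∫ ζs, k ζ ζs * g ζs

/-- The norm ‖g‖_* = (∫ g(ζ)² ν(ζ) dζ)^{1/2}. -/
def starNorm (ν : (Fin 3 → ℝ) → ℝ) (g : (Fin 3 → ℝ) → ℝ) : ℝ :=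
  Real.sqrt (∫ ζ, (g ζ) ^ 2 * ν ζ)

/-- Mild (integral-equation) solution of ζ₁ ∂ₓ f = -ν f + K(f) on [0, l]. -/
def MildSolution (l : ℝ) (ν : (Fin 3 → ℝ) → ℝ)
    (k : (Fin 3 → ℝ) → (Fin 3 → ℝ) → ℝ) (f : ℝ → (Fin 3 → ℝ) → ℝ) : Prop :=
  (∀ x ∈ Icc (0 : ℝ) l, ∀ ζ : Fin 3 → ℝ, 0 < ζ 0 →
    f x ζ = Real.exp (-(ν ζ * x) / |ζ 0|) * f 0 ζ +
      ∫ s in (0 : ℝ)..x, (1 / |ζ 0|) * Real.exp (-(ν ζ * (x - s)) / |ζ 0|) * Kop k (f s) ζ) ∧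
  (∀ x ∈ Icc (0 : ℝ) l, ∀ ζ : Fin 3 → ℝ, ζ 0 < 0 →
    f x ζ = Real.exp (-(ν ζ * (l - x)) / |ζ 0|) * f l ζ +
      ∫ s in x..l, (1 / |ζ 0|) * Real.exp (-(ν ζ * (s - x)) / |ζ 0|) * Kop k (f s) ζ)


lemma aux_log_lb {t : ℝ} (ht : 0 < t) : t / (1 + t) ≤ Real.log (1 + t) := by
  have h1 : (0:ℝ) < 1 + t := by linarith
  have h := Real.log_le_sub_one_of_pos (show (0:ℝ) < (1+t)⁻¹ by positivity)
  rw [Real.log_inv] at h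
  have e : 1 - (1+t)⁻¹ = t / (1+t) := by field_simp; ring
  linarith [e ▸ (by linarith : 1 - (1+t)⁻¹ ≤ Real.log (1+t))]

lemma aux_log_ub {t : ℝ} (ht : 0 < t) : Real.log (1 + t) ≤ t * (t + 2) / (2 * (t + 1)) := by
  have h0 : (0:ℝ) < 1 + t := by linarith
  have hlog : 0 < Real.log (1 + t) := Real.log_pos (by linarith)
  have hs : Real.log (1+t) < Real.sinh (Real.log (1+t)) := Real.self_lt_sinh_iff.mpr hlog
  rw [Real.sinh_log h0] at hs
  have e : (1 + t - (1+t)⁻¹)/2 = t * (t+2)/(2*(t+1)) := by field_simp; ring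
  linarith [e ▸ hs.le]

def gaux (x a : ℝ) (z : ℝ) : ℝ :=
  Real.exp (-x/z) * ((x/z^2) * Real.log (1 + a*z/x) + a*z/(z*(x+a*z)))

lemma exp_le_div {x z : ℝ} (hx : 0 < x) (hz : 0 < z) : Real.exp (-x/z) ≤ z / x := by
  have h : x / z ≤ Real.exp (x/z) := by linarith [Real.add_one_le_exp (x/z)]
  have h2 : (Real.exp (x/z))⁻¹ ≤ (x/z)⁻¹ := by
    apply inv_anti₀ (by positivity) h
  rw [neg_div, Real.exp_neg]
  calc (Real.exp (x/z))⁻¹ ≤ (x/z)⁻¹ := h2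
    _ = z/x := by rw [inv_div]

lemma gaux_nonneg {x a : ℝ} (hx : 0 < x) (ha : 0 ≤ a) {z : ℝ} (hz : 0 < z) :
    0 ≤ gaux x a z := by
  have hlog0 : 0 ≤ Real.log (1 + a*z/x) := Real.log_nonneg (by
    have : 0 ≤ a*z/x := by positivity
    linarith)
  exact mul_nonneg (Real.exp_pos _).le
    (add_nonneg (mul_nonneg (by positivity) hlog0) (by positivity))

lemma gaux_bound {x a : ℝ} (hx : 0 < x) (ha : 0 < a) {z : ℝ} (hz : 0 < z) (hz1 : z ≤ 1) :
    ‖gaux x a z‖ ≤ 2 * a / x := by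
  have hE : Real.exp (-x/z) ≤ z/x := exp_le_div hx hz
  have hE1 : Real.exp (-x/z) ≤ 1 := by
    rw [Real.exp_le_one_iff, neg_div]
    exact neg_nonpos.mpr (by positivity)
  have hlog0 : 0 ≤ Real.log (1 + a*z/x) := Real.log_nonneg (by
    have : 0 ≤ a*z/x := by positivity
    linarith)
  have hlog : Real.log (1 + a*z/x) ≤ a*z/x := by
    have := Real.log_le_sub_one_of_pos (show (0:ℝ) < 1 + a*z/x by positivity)
    linarith
  have h1 : Real.exp (-x/z) * ((x/z^2) * Real.log (1+a*z/x)) ≤ a/x := by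
    calc Real.exp (-x/z) * ((x/z^2) * Real.log (1+a*z/x))
        ≤ (z/x) * ((x/z^2) * (a*z/x)) := by
          apply mul_le_mul hE (by gcongr) (by positivity) (by positivity)
      _ = a/x := by field_simp
  have e2 : a*z/(z*(x+a*z)) = a/(x+a*z) := by
    rw [mul_comm a z, mul_div_mul_left _ _ hz.ne']
  have h2 : Real.exp (-x/z) * (a*z/(z*(x+a*z))) ≤ a/x := by
    rw [e2]
    calc Real.exp (-x/z) * (a/(x+a*z)) ≤ 1 * (a/x) := by
          apply mul_le_mul hE1 (by gcongr; nlinarith) (by positivity) one_pos.le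
      _ = a/x := one_mul _
  rw [Real.norm_eq_abs, abs_of_nonneg (gaux_nonneg hx ha.le hz)]
  unfold gaux
  rw [mul_add]
  have : 2*a/x = a/x + a/x := by ring
  linarith

lemma gaux_intble {x a : ℝ} (hx : 0 < x) (ha : 0 < a) :
    IntervalIntegrable (gaux x a) volume 0 1 := by
  rw [intervalIntegrable_iff_integrableOn_Ioc_of_le (by norm_num)]
  apply Measure.integrableOn_of_bounded (M := 2*a/x) measure_Ioc_lt_top.ne
  · apply Measurable.aestronglyMeasurable
    unfold gaux
    have m1 : Measurable (fun z : ℝ => -x/z) := measurable_const.div measurable_id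
    have m2 : Measurable (fun z : ℝ => Real.exp (-x/z)) := Real.measurable_exp.comp m1
    have m3 : Measurable (fun z : ℝ => 1 + a*z/x) :=
      measurable_const.add ((measurable_const.mul measurable_id).div measurable_const)
    have m4 : Measurable (fun z : ℝ => Real.log (1 + a*z/x)) := Real.measurable_log.comp m3
    have m5 : Measurable (fun z : ℝ => x/z^2) := measurable_const.div (measurable_id.pow_const 2)
    have m6 : Measurable (fun z : ℝ => a*z/(z*(x+a*z))) :=
      (measurable_const.mul measurable_id).div
        (measurable_id.mul (measurable_const.add (measurable_const.mul measurable_id)))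
    exact m2.mul ((m5.mul m4).add m6)
  · filter_upwards [ae_restrict_mem measurableSet_Ioc] with z hz
    exact gaux_bound hx ha hz.1 hz.2

lemma gaux_ftc {x a : ℝ} (hx : 0 < x) (ha : 0 < a) :
    ∫ z in (0:ℝ)..1, gaux x a z = Real.exp (-x) * Real.log (1 + a/x) := by
  set F : ℝ → ℝ := fun z => Real.exp (-x/z) * Real.log (1 + a*z/x) with hF
  have key : ∫ z in (0:ℝ)..1, gaux x a z = F 1 - F 0 := by
    apply integral_eq_sub_of_hasDeriv_right_of_le (by norm_num) _ _ (gaux_intble hx ha)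
    · -- continuity on Icc 0 1
      intro z hz
      rcases eq_or_lt_of_le hz.1 with h0 | h0
      · subst h0
        apply ContinuousWithinAt.mono _ (Icc_subset_Ici_self)
        rw [← Set.Ioi_insert]
        rw [continuousWithinAt_insert_self]
        have hF0 : F 0 = 0 := by simp [hF]
        unfold ContinuousWithinAt
        rw [hF0]
        apply squeeze_zero' (f := F) (g := fun z => z * (a/x))
        · filter_upwards [self_mem_nhdsWithin] with z hz
          have hz : (0:ℝ) < z := hz
          apply mul_nonneg (Real.exp_pos _).le
          apply Real.log_nonneg
          have : 0 ≤ a*z/x := by positivity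
          linarith
        · filter_upwards [self_mem_nhdsWithin] with z hz
          have hz : (0:ℝ) < z := hz
          have hE1 : Real.exp (-x/z) ≤ 1 := by
            rw [Real.exp_le_one_iff, neg_div]
            exact neg_nonpos.mpr (by positivity)
          have hlog : Real.log (1 + a*z/x) ≤ a*z/x := by
            have := Real.log_le_sub_one_of_pos (show (0:ℝ) < 1 + a*z/x by positivity)
            linarith
          have hlog0 : 0 ≤ Real.log (1 + a*z/x) := Real.log_nonneg (by
            have : 0 ≤ a*z/x := by positivity
            linarith)
          calc F z ≤ 1 * (a*z/x) := mul_le_mul hE1 hlog hlog0 one_pos.le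
            _ = z * (a/x) := by ring
        · have : Continuous (fun z : ℝ => z * (a/x)) := by continuity
          exact (this.tendsto' 0 0 (by simp)).mono_left nhdsWithin_le_nhds
      · apply ContinuousAt.continuousWithinAt
        have c1 : ContinuousAt (fun y : ℝ => -x/y) z :=
          ContinuousAt.div continuousAt_const continuousAt_id h0.ne'
        have c2 : ContinuousAt (fun y : ℝ => Real.exp (-x/y)) z :=
          Real.continuous_exp.continuousAt.comp c1
        have c3 : ContinuousAt (fun y : ℝ => 1 + a*y/x) z := by fun_prop
        have c4 : ContinuousAt (fun y : ℝ => Real.log (1 + a*y/x)) z :=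
          (Real.continuousAt_log (by positivity)).comp c3
        exact c2.mul c4
    · -- derivative
      intro z hz
      have hz0 : 0 < z := hz.1
      have h1 : HasDerivAt (fun y : ℝ => -x/y) (x/z^2) z := by
        have h := (hasDerivAt_inv hz0.ne').const_mul (-x)
        simp only [div_eq_mul_inv]
        refine h.congr_deriv ?_
        ring
      have h2 := h1.exp
      have h3 : HasDerivAt (fun y : ℝ => 1 + a*y/x) (a/x) z := by
        simpa using (((hasDerivAt_id z).const_mul a).div_const x).const_add 1
      have h4 := h3.log (ne_of_gt (show (0:ℝ) < 1 + a*z/x by positivity))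
      have h5 := h2.mul h4
      have e : gaux x a z =
          Real.exp (-x/z) * (x/z^2) * Real.log (1+a*z/x) +
            Real.exp (-x/z) * (a/x/(1+a*z/x)) := by
        unfold gaux
        have hxz : x + a*z ≠ 0 := by positivity
        field_simp
      rw [e]
      exact h5.hasDerivWithinAt
  rw [key]
  simp only [hF]
  norm_num

lemma faux_intble {x : ℝ} (hx : 0 < x) :
    IntervalIntegrable (fun z : ℝ => z⁻¹ * Real.exp (-x / z)) volume 0 1 := by
  rw [intervalIntegrable_iff_integrableOn_Ioc_of_le (by norm_num)]
  apply Measure.integrableOn_of_bounded (M := 1/x) measure_Ioc_lt_top.ne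
  · exact (measurable_inv.mul
      (Real.measurable_exp.comp (measurable_const.div measurable_id))).aestronglyMeasurable
  · filter_upwards [ae_restrict_mem measurableSet_Ioc] with z hz
    have hz0 : 0 < z := hz.1
    have hE : Real.exp (-x/z) ≤ z/x := exp_le_div hx hz0
    rw [Real.norm_eq_abs, abs_of_nonneg (by positivity)]
    calc z⁻¹ * Real.exp (-x/z) ≤ z⁻¹ * (z/x) := by gcongr
      _ = 1/x := by field_simp

lemma upper_pt {x z : ℝ} (hx : 0 < x) (hz : 0 < z) :
    z⁻¹ * Real.exp (-x / z) ≤ gaux x 1 z := by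
  unfold gaux
  simp only [one_mul]
  have hxz : x + z ≠ 0 := by positivity
  have hlog : z/(x+z) ≤ Real.log (1 + z/x) := by
    have h := aux_log_lb (show 0 < z/x by positivity)
    have e : (z/x)/(1+z/x) = z/(x+z) := by field_simp
    rw [e] at h; exact h
  calc z⁻¹ * Real.exp (-x/z)
      = Real.exp (-x/z) * ((x/z^2) * (z/(x+z)) + z/(z*(x+z))) := by field_simp
    _ ≤ Real.exp (-x/z) * ((x/z^2) * Real.log (1 + z/x) + z/(z*(x+z))) := by gcongr

lemma lower_pt {x z : ℝ} (hx : 0 < x) (hz : 0 < z) :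
    (1/2) * gaux x 2 z ≤ z⁻¹ * Real.exp (-x / z) := by
  unfold gaux
  have hxz : x + 2*z ≠ 0 := by positivity
  have hlog : Real.log (1 + 2*z/x) ≤ 2*z*(x+z)/(x*(x+2*z)) := by
    have h := aux_log_ub (show 0 < 2*z/x by positivity)
    have e : (2*z/x)*((2*z/x)+2)/(2*((2*z/x)+1)) = 2*z*(x+z)/(x*(x+2*z)) := by
      field_simp; ring
    rw [e] at h; exact h
  calc (1/2) * (Real.exp (-x/z) * ((x/z^2) * Real.log (1 + 2*z/x) + 2*z/(z*(x+2*z))))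
      ≤ (1/2) * (Real.exp (-x/z) * ((x/z^2) * (2*z*(x+z)/(x*(x+2*z))) + 2*z/(z*(x+2*z)))) := by gcongr
    _ = z⁻¹ * Real.exp (-x/z) := by field_simp; ring

/-- bounds for the exponential integral E₁(x) = ∫₀¹ z⁻¹ e^{-x/z} dz:
(1/2) e^{-x} ln(1+2/x) ≤ E₁(x) ≤ e^{-x} ln(1+1/x) for all x > 0. -/
theorem stmt16 (x : ℝ) (hx : 0 < x) :
    (1 / 2) * Real.exp (-x) * Real.log (1 + 2 / x) ≤
        (∫ z in (0 : ℝ)..1, z⁻¹ * Real.exp (-x / z)) ∧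
      (∫ z in (0 : ℝ)..1, z⁻¹ * Real.exp (-x / z)) ≤ Real.exp (-x) * Real.log (1 + 1 / x) := by
  have hfi := faux_intble hx
  constructor
  · have hgi := (gaux_intble hx (show (0:ℝ) < 2 by norm_num)).const_mul (1/2 : ℝ)
    have hmono : (∫ z in (0:ℝ)..1, (1/2 : ℝ) * gaux x 2 z) ≤
        ∫ z in (0:ℝ)..1, z⁻¹ * Real.exp (-x / z) := by
      apply intervalIntegral.integral_mono_on (by norm_num) hgi hfi
      intro z hz
      rcases eq_or_lt_of_le hz.1 with h0 | h0
      · simp [gaux, ← h0]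
      · exact lower_pt hx h0
    calc (1/2) * Real.exp (-x) * Real.log (1 + 2/x)
        = ∫ z in (0:ℝ)..1, (1/2 : ℝ) * gaux x 2 z := by
          rw [intervalIntegral.integral_const_mul, gaux_ftc hx (show (0:ℝ) < 2 by norm_num)]
          ring
      _ ≤ _ := hmono
  · have hgi := gaux_intble hx (show (0:ℝ) < 1 by norm_num)
    have hmono : (∫ z in (0:ℝ)..1, z⁻¹ * Real.exp (-x / z)) ≤
        ∫ z in (0:ℝ)..1, gaux x 1 z := by
      apply intervalIntegral.integral_mono_on (by norm_num) hfi hgi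
      intro z hz
      rcases eq_or_lt_of_le hz.1 with h0 | h0
      · simp [gaux, ← h0]
      · exact upper_pt hx h0
    calc (∫ z in (0:ℝ)..1, z⁻¹ * Real.exp (-x / z))
        ≤ ∫ z in (0:ℝ)..1, gaux x 1 z := hmono
      _ = Real.exp (-x) * Real.log (1 + 1/x) := gaux_ftc hx (by norm_num)
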